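/- Theorem (stacking/interpolation): Let < be a product order on k[X₁,…,Xₙ], and let A ⊆ 𝔸ⁿ be a variety whose irreducible components are affine d-planes all parallel to the hyperplane {X₁ = 0}. Let Y = p(A) ⊆ 𝔸¹ be the (finite) set of first coordinates of points of A, and for λ ∈ Y let A_λ = A ∩ {X₁ = λ}, regarded as a subvariety of 𝔸ⁿ⁻¹. Then D(A) = Σ_{λ ∈ Y} D(A_λ), the sum being the addition of standard sets (with each D(A_λ) ⊆ ℕⁿ⁻¹ embedded into ℕⁿ via α ↦ (0,α)). -/

import Mathlib

open MvPolynomial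

/-- `β` is the leading exponent of `f` with respect to the monomial order `m`. -/
def IsLeadExp {σ : Type*} {k : Type*} [CommSemiring k] (m : MonomialOrder σ)
    (f : MvPolynomial σ k) (β : σ →₀ ℕ) : Prop :=
  β ∈ f.support ∧ ∀ α ∈ f.support, α ≠ β → m.toSyn α < m.toSyn β

/-- `C(I)`: the set of leading exponents of nonzero elements of the ideal `I`. -/
def expC {σ : Type*} {k : Type*} [CommSemiring k] (m : MonomialOrder σ)
    (I : Ideal (MvPolynomial σ k)) : Set (σ →₀ ℕ) :=
  {β | ∃ f ∈ I, IsLeadExp m f β}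

/-- `D(I)`: the standard set (set of exponents of standard monomials) of the ideal `I`. -/
def expD {σ : Type*} {k : Type*} [CommSemiring k] (m : MonomialOrder σ)
    (I : Ideal (MvPolynomial σ k)) : Set (σ →₀ ℕ) :=
  (expC m I)ᶜ

/-- The projection `ℕⁿ → ℕⁿ⁻¹` dropping the first coordinate. -/
noncomputable def pr {n : ℕ} (β : Fin (n + 1) →₀ ℕ) : Fin n →₀ ℕ :=
  Finsupp.comapDomain Fin.succ β (Fin.succ_injective n).injOn

/-- The embedding `ℕⁿ⁻¹ → ℕⁿ`, putting `0` in the first coordinate. -/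
noncomputable def emb {n : ℕ} (α : Fin n →₀ ℕ) : Fin (n + 1) →₀ ℕ :=
  Finsupp.mapDomain Fin.succ α

/-- `t` is a *product order* restricting to `tb`: `α < β` iff `p(α) < p(β)`, or
`p(α) = p(β)` and `α₁ < β₁`, where `p` drops the first coordinate. -/
def IsProductOrder {n : ℕ} (t : MonomialOrder (Fin (n + 1)))
    (tb : MonomialOrder (Fin n)) : Prop :=
  ∀ α β : Fin (n + 1) →₀ ℕ,
    (t.toSyn α < t.toSyn β ↔
      (tb.toSyn (pr α) < tb.toSyn (pr β) ∨ (pr α = pr β ∧ α 0 < β 0)))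

/-- The fiber `A_λ = A ∩ {X₁ = λ}`, regarded as a subvariety of `𝔸ⁿ⁻¹`. -/
def fiberAt {k : Type*} {n : ℕ} (A : Set (Fin (n + 1) → k)) (lam : k) :
    Set (Fin n → k) :=
  {y | Fin.cons lam y ∈ A}

/-- `A′` is a `d`-dimensional affine subspace of the affine space with coordinates `ι`. -/
def IsAffineDPlane {k : Type*} [Field k] {ι : Type*} [Fintype ι] (d : ℕ)
    (A' : Set (ι → k)) : Prop :=
  ∃ S : AffineSubspace k (ι → k),
    A' = (S : Set (ι → k)) ∧ A'.Nonempty ∧ Module.finrank k S.direction = d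

/-- `{X_j : j ∈ J}` is a set of free variables of `A′`. -/
def IsFreeVars {k : Type*} [Field k] {ι : Type*} (A' : Set (ι → k)) (J : Finset ι) :
    Prop :=
  ∀ v : ι → k, ∃! x, x ∈ A' ∧ ∀ j ∈ J, x j = v j

/-- `{X_j : j ∈ J}` is the set of *minimal* free variables of `A′`. -/
def IsMinFreeVars {k : Type*} [Field k] {ι : Type*} [LinearOrder ι] [DecidableEq ι]
    (A' : Set (ι → k)) (J : Finset ι) : Prop :=
  IsFreeVars A' J ∧ ∀ j ∈ J, ∀ i ∉ J, i < j → ¬ IsFreeVars A' (insert i (J.erase j))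

lemma pr_eq_tail {n : ℕ} (β : Fin (n + 1) →₀ ℕ) : pr β = Finsupp.tail β := by
  ext i
  simp [pr, Finsupp.comapDomain_apply, Finsupp.tail_apply]

lemma pr_cons {n : ℕ} (i : ℕ) (γ : Fin n →₀ ℕ) : pr (Finsupp.cons i γ) = γ := by
  rw [pr_eq_tail, Finsupp.tail_cons]

lemma cons_pr {n : ℕ} (β : Fin (n + 1) →₀ ℕ) : Finsupp.cons (β 0) (pr β) = β := by
  rw [pr_eq_tail, Finsupp.cons_tail]

lemma eval_section {K : Type*} [CommSemiring K] {n : ℕ}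
    (F : Polynomial (MvPolynomial (Fin n) K)) (lam : K) (x' : Fin n → K) :
    eval (Fin.cons lam x') ((finSuccEquiv K n).symm F) = eval x' (F.eval (MvPolynomial.C lam)) := by
  rw [eval_eq_eval_mv_eval', AlgEquiv.apply_symm_apply, Polynomial.eval_map]
  show _ = (eval x' : MvPolynomial (Fin n) K →+* K) (Polynomial.eval₂ (RingHom.id _) (MvPolynomial.C lam) F)
  rw [Polynomial.hom_eval₂]
  simp

lemma coeff_eval_C {K : Type*} [CommSemiring K] {n : ℕ}
    (F : Polynomial (MvPolynomial (Fin n) K)) (lam : K) (γ : Fin n →₀ ℕ) :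
    MvPolynomial.coeff γ (F.eval (MvPolynomial.C lam)) =
      ∑ i ∈ F.support, MvPolynomial.coeff γ (F.coeff i) * lam ^ i := by
  conv_lhs => rw [Polynomial.eval_eq_sum, Polynomial.sum_def]
  rw [MvPolynomial.coeff_sum]
  refine Finset.sum_congr rfl fun i _ => ?_
  rw [mul_comm, ← MvPolynomial.C_pow, MvPolynomial.coeff_C_mul, mul_comm]

/-- Theorem (stacking): if `<` is a product order and all components of `A` are affine
`d`-planes parallel to `{X₁ = 0}`, then `D(A) = Σ_{λ∈Y} D(A_λ)`, `Y = p(A)`; in closed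
form, `β ∈ D(A)` iff `β₁ < #{λ ∈ Y : p(β) ∈ D(A_λ)}` (each `D(A_λ) ⊆ ℕⁿ⁻¹` being
embedded into `ℕⁿ` via `α ↦ (0,α)`). -/
theorem stacking {k : Type*} [Field k] [Infinite k] {n d mm : ℕ}
    (t : MonomialOrder (Fin (n + 1))) (tb : MonomialOrder (Fin n))
    (hprod : IsProductOrder t tb)
    (P : Fin mm → Set (Fin (n + 1) → k))
    (hP : ∀ c, IsAffineDPlane d (P c))
    (hpar : ∀ c, ∀ x ∈ P c, ∀ y ∈ P c, x 0 = y 0)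
    (A : Set (Fin (n + 1) → k)) (hA : A = ⋃ c, P c) :
    expD t (MvPolynomial.vanishingIdeal k A) =
      {β : Fin (n + 1) →₀ ℕ |
        β 0 < {lam ∈ (fun x => x 0) '' A |
          pr β ∈ expD tb (MvPolynomial.vanishingIdeal k (fiberAt A lam))}.ncard} := by
  classical
  have hYfin : ((fun x : Fin (n + 1) → k => x 0) '' A).Finite := by
    rw [hA, Set.image_iUnion]
    exact Set.finite_iUnion fun c =>
      Set.Subsingleton.finite (by
        rintro y ⟨x, hx, rfl⟩ z ⟨w, hw, rfl⟩
        exact hpar c x hx w hw)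
  ext β
  simp only [expD, Set.mem_compl_iff, Set.mem_setOf_eq]
  set S : Set k := {lam | lam ∈ (fun x : Fin (n + 1) → k => x 0) '' A ∧
      pr β ∉ expC tb (MvPolynomial.vanishingIdeal k (fiberAt A lam))} with hS
  have hSfin : S.Finite := hYfin.subset (Set.sep_subset _ _)
  rw [← not_le]
  apply not_congr
  constructor
  · rintro ⟨f, hfI, hfβ, hfmax⟩
    set Fq := finSuccEquiv k n f with hFq
    set a : ℕ → k := fun i => MvPolynomial.coeff (Finsupp.cons i (pr β)) f with ha
    have haF : ∀ i : ℕ, a i = MvPolynomial.coeff (pr β) (Fq.coeff i) := fun i => by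
      rw [hFq]; exact (finSuccEquiv_coeff_coeff (pr β) f i).symm
    have ha0 : a (β 0) ≠ 0 := by
      rw [ha]
      simpa [cons_pr] using MvPolynomial.mem_support_iff.mp hfβ
    have hagt : ∀ i, β 0 < i → a i = 0 := by
      intro i hi
      by_contra hne
      have hmem : Finsupp.cons i (pr β) ∈ f.support := MvPolynomial.mem_support_iff.mpr hne
      have hneq : Finsupp.cons i (pr β) ≠ β := by
        intro h
        have := congrArg (fun γ : Fin (n + 1) →₀ ℕ => γ 0) h
        simp only [Finsupp.cons_zero] at this
        omega
      have hlt := hfmax _ hmem hneq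
      rw [hprod] at hlt
      rcases hlt with h | ⟨-, h⟩
      · rw [pr_cons] at h; exact lt_irrefl _ h
      · rw [Finsupp.cons_zero] at h; omega
    have hkey : ∀ lam ∈ S, ∑ i ∈ Finset.range (β 0 + 1), a i * lam ^ i = 0 := by
      intro lam hlam
      obtain ⟨hlamY, hlamD⟩ := hlam
      set g := Fq.eval (MvPolynomial.C lam) with hg
      have hgI : g ∈ MvPolynomial.vanishingIdeal k (fiberAt A lam) := by
        rw [MvPolynomial.mem_vanishingIdeal_iff]
        intro x' hx'
        rw [MvPolynomial.aeval_eq_eval, hg, hFq, ← eval_section, AlgEquiv.symm_apply_apply]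
        exact (MvPolynomial.aeval_eq_eval (f := Fin.cons lam x')) ▸ hfI _ hx'
      have hcoeffg : ∀ γ ∈ g.support, γ ≠ pr β → tb.toSyn γ < tb.toSyn (pr β) := by
        intro γ hγ hne
        rw [MvPolynomial.mem_support_iff, hg, coeff_eval_C] at hγ
        obtain ⟨i, -, hi⟩ := Finset.exists_ne_zero_of_sum_ne_zero hγ
        have h1 : Finsupp.cons i γ ∈ f.support := by
          rw [MvPolynomial.mem_support_iff]
          intro h0
          apply hi
          have hcc : MvPolynomial.coeff γ (Fq.coeff i) = MvPolynomial.coeff (Finsupp.cons i γ) f := by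
            rw [hFq]; exact finSuccEquiv_coeff_coeff γ f i
          rw [hcc, h0, zero_mul]
        have h2 : Finsupp.cons i γ ≠ β := by
          intro h
          exact hne (by rw [← cons_pr β, ← h, pr_cons, pr_cons])
        have hlt := hfmax _ h1 h2
        rw [hprod] at hlt
        rcases hlt with h | ⟨h, -⟩
        · rwa [pr_cons] at h
        · rw [pr_cons] at h; exact absurd h hne
      have hcoeffprβ : MvPolynomial.coeff (pr β) g = 0 := by
        by_contra h
        exact hlamD ⟨g, hgI, MvPolynomial.mem_support_iff.mpr h, hcoeffg⟩
      have hgsum : MvPolynomial.coeff (pr β) g = ∑ i ∈ Fq.support, a i * lam ^ i := by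
        rw [hg, coeff_eval_C]
        exact Finset.sum_congr rfl fun i _ => by rw [haF]
      have hcommon : ∀ i ∈ Fq.support ∪ Finset.range (β 0 + 1), i ∉ Fq.support → a i * lam ^ i = 0 := by
        intro i _ hi
        rw [haF, Polynomial.notMem_support_iff.mp hi, MvPolynomial.coeff_zero, zero_mul]
      have hcommon' : ∀ i ∈ Fq.support ∪ Finset.range (β 0 + 1),
          i ∉ Finset.range (β 0 + 1) → a i * lam ^ i = 0 := by
        intro i _ hi
        rw [hagt i (by simpa using hi), zero_mul]
      calc ∑ i ∈ Finset.range (β 0 + 1), a i * lam ^ i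
          = ∑ i ∈ Fq.support ∪ Finset.range (β 0 + 1), a i * lam ^ i :=
            Finset.sum_subset Finset.subset_union_right hcommon'
        _ = ∑ i ∈ Fq.support, a i * lam ^ i :=
            (Finset.sum_subset Finset.subset_union_left hcommon).symm
        _ = 0 := by rw [← hgsum, hcoeffprβ]
    set dd : Polynomial k := ∑ i ∈ Finset.range (β 0 + 1), Polynomial.C (a i) * Polynomial.X ^ i
      with hdd
    have hddcoeff : dd.coeff (β 0) = a (β 0) := by
      rw [hdd, Polynomial.finset_sum_coeff]
      simp only [Polynomial.coeff_C_mul, Polynomial.coeff_X_pow, mul_ite, mul_one, mul_zero]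
      simp [Finset.sum_ite_eq]
    have hddne : dd ≠ 0 := fun h => ha0 (by rw [← hddcoeff, h, Polynomial.coeff_zero])
    have hdddeg : dd.natDegree ≤ β 0 := by
      apply Polynomial.natDegree_sum_le_of_forall_le
      intro i hi
      exact le_trans (Polynomial.natDegree_C_mul_le _ _)
        (by simpa [Polynomial.natDegree_X_pow] using Nat.lt_succ_iff.mp (Finset.mem_range.mp hi))
    have hroots : S ⊆ ↑dd.roots.toFinset := by
      intro lam hlam
      rw [Finset.mem_coe, Multiset.mem_toFinset, Polynomial.mem_roots hddne]
      show dd.eval lam = 0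
      rw [hdd, Polynomial.eval_finset_sum]
      simpa using hkey lam hlam
    calc S.ncard ≤ (↑dd.roots.toFinset : Set k).ncard :=
          Set.ncard_le_ncard hroots dd.roots.toFinset.finite_toSet
      _ = dd.roots.toFinset.card := Set.ncard_coe_finset _
      _ ≤ Multiset.card dd.roots := Multiset.toFinset_card_le _
      _ ≤ dd.natDegree := Polynomial.card_roots' dd
      _ ≤ β 0 := hdddeg
  · intro hm
    have hmcard : hSfin.toFinset.card ≤ β 0 := by
      rw [← Set.ncard_eq_toFinset_card S hSfin]; exact hm
    set Yfin := hYfin.toFinset with hYf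
    set m0 := hSfin.toFinset.card with hm0
    set e := β 0 - m0 with he
    have hem : e + m0 = β 0 := by omega
    set q : Polynomial k := ∏ lam ∈ hSfin.toFinset, (Polynomial.X - Polynomial.C lam) with hq
    have hqmonic : q.Monic :=
      Polynomial.monic_prod_of_monic _ _ fun i _ => Polynomial.monic_X_sub_C i
    have hqdeg : q.natDegree = m0 := by
      rw [hq, Polynomial.natDegree_prod _ _ fun i _ => Polynomial.X_sub_C_ne_zero i]
      simp [Polynomial.natDegree_X_sub_C, hm0]
    set Q : Polynomial k := Polynomial.X ^ e * q with hQ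
    have hQmonic : Q.Monic := (Polynomial.monic_X_pow e).mul hqmonic
    have hQdeg : Q.natDegree = β 0 := by
      rw [hQ, (Polynomial.monic_X_pow e).natDegree_mul hqmonic, Polynomial.natDegree_X_pow,
        hqdeg, hem]
    have hQβ : Q.coeff (β 0) = 1 := by
      rw [← hQdeg]; exact hQmonic.coeff_natDegree
    have hQgt : ∀ i, β 0 < i → Q.coeff i = 0 := fun i hi =>
      Polynomial.coeff_eq_zero_of_natDegree_lt (lt_of_le_of_lt (le_of_eq hQdeg) hi)
    have hgex : ∀ lam : k, pr β ∈ expC tb (MvPolynomial.vanishingIdeal k (fiberAt A lam)) →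
        ∃ g : MvPolynomial (Fin n) k, g ∈ MvPolynomial.vanishingIdeal k (fiberAt A lam) ∧
          MvPolynomial.coeff (pr β) g = 1 ∧
          ∀ γ ∈ g.support, γ ≠ pr β → tb.toSyn γ < tb.toSyn (pr β) := by
      rintro lam ⟨g0, hg0I, hg0s, hg0max⟩
      have hcn : MvPolynomial.coeff (pr β) g0 ≠ 0 := MvPolynomial.mem_support_iff.mp hg0s
      refine ⟨MvPolynomial.C (MvPolynomial.coeff (pr β) g0)⁻¹ * g0,
        Ideal.mul_mem_left _ _ hg0I,
        by rw [MvPolynomial.coeff_C_mul]; exact inv_mul_cancel₀ hcn, ?_⟩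
      intro γ hγ hne
      refine hg0max γ ?_ hne
      rw [MvPolynomial.mem_support_iff] at hγ ⊢
      intro h0
      exact hγ (by rw [MvPolynomial.coeff_C_mul, h0, mul_zero])
    choose gfun hgI hg1 hgmax using hgex
    set M : MvPolynomial (Fin n) k := MvPolynomial.monomial (pr β) 1 with hM
    set G : k → MvPolynomial (Fin n) k := fun lam =>
      if h : pr β ∈ expC tb (MvPolynomial.vanishingIdeal k (fiberAt A lam)) then gfun lam h
      else M with hG
    have hMβ : MvPolynomial.coeff (pr β) M = 1 := by
      rw [hM, MvPolynomial.coeff_monomial, if_pos rfl]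
    have hMne : ∀ γ, γ ≠ pr β → MvPolynomial.coeff γ M = 0 := by
      intro γ hne
      rw [hM, MvPolynomial.coeff_monomial, if_neg fun h => hne h.symm]
    have hG1 : ∀ lam, MvPolynomial.coeff (pr β) (G lam) = 1 := by
      intro lam
      rw [hG]; dsimp only; split
      · exact hg1 _ _
      · exact hMβ
    have hGz : ∀ lam, ∀ γ, γ ≠ pr β → ¬ tb.toSyn γ < tb.toSyn (pr β) →
        MvPolynomial.coeff γ (G lam) = 0 := by
      intro lam γ hne hnlt
      by_contra h0
      have hγ : γ ∈ (G lam).support := MvPolynomial.mem_support_iff.mpr h0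
      rw [hG] at hγ; dsimp only at hγ
      split at hγ
      · exact hnlt (hgmax _ _ _ hγ hne)
      · exact (MvPolynomial.mem_support_iff.mp hγ) (hMne γ hne)
    set c : k → k := fun lam => lam ^ e * q.eval lam with hc
    set F : Polynomial (MvPolynomial (Fin n) k) :=
      (Q.map MvPolynomial.C) * Polynomial.C M
        + ∑ lam ∈ Yfin, Polynomial.C (MvPolynomial.C (c lam) * (G lam - M))
            * ((Lagrange.basis Yfin id lam).map MvPolynomial.C) with hF
    set f : MvPolynomial (Fin (n + 1)) k := (finSuccEquiv k n).symm F with hf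
    have hcoefff : ∀ (i : ℕ) (γ : Fin n →₀ ℕ), MvPolynomial.coeff (Finsupp.cons i γ) f =
        Q.coeff i * MvPolynomial.coeff γ M
        + ∑ lam ∈ Yfin, c lam * (MvPolynomial.coeff γ (G lam) - MvPolynomial.coeff γ M)
            * (Lagrange.basis Yfin id lam).coeff i := by
      intro i γ
      have h1 : MvPolynomial.coeff (Finsupp.cons i γ) f = MvPolynomial.coeff γ (F.coeff i) := by
        rw [← finSuccEquiv_coeff_coeff γ f i, hf, AlgEquiv.apply_symm_apply]
      rw [h1, hF, Polynomial.coeff_add, Polynomial.coeff_mul_C, Polynomial.coeff_map,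
        Polynomial.finset_sum_coeff, MvPolynomial.coeff_add, MvPolynomial.coeff_sum]
      congr 1
      · rw [MvPolynomial.coeff_C_mul]
      · refine Finset.sum_congr rfl fun lam _ => ?_
        rw [Polynomial.coeff_C_mul, Polynomial.coeff_map]
        rw [show MvPolynomial.C (c lam) * (G lam - M)
              * MvPolynomial.C ((Lagrange.basis Yfin id lam).coeff i)
            = MvPolynomial.C (c lam * (Lagrange.basis Yfin id lam).coeff i) * (G lam - M) from by
          simp only [map_mul]; ring]
        rw [MvPolynomial.coeff_C_mul, MvPolynomial.coeff_sub]
        ring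
    have hfprβ : ∀ i : ℕ, MvPolynomial.coeff (Finsupp.cons i (pr β)) f = Q.coeff i := by
      intro i
      rw [hcoefff, hMβ, mul_one,
        Finset.sum_eq_zero (fun lam _ => by rw [hG1, sub_self, mul_zero, zero_mul]), add_zero]
    have hfβ : β ∈ f.support := by
      have h := hfprβ (β 0)
      rw [cons_pr] at h
      rw [MvPolynomial.mem_support_iff, h, hQβ]
      exact one_ne_zero
    have hother : ∀ γ, γ ≠ pr β → ¬ tb.toSyn γ < tb.toSyn (pr β) → ∀ i : ℕ,
        MvPolynomial.coeff (Finsupp.cons i γ) f = 0 := by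
      intro γ hne hnlt i
      rw [hcoefff, hMne γ hne, mul_zero, zero_add]
      apply Finset.sum_eq_zero
      intro lam _
      rw [hGz lam γ hne hnlt]
      simp
    have hfmax : ∀ α ∈ f.support, α ≠ β → t.toSyn α < t.toSyn β := by
      intro α hα hne
      rw [MvPolynomial.mem_support_iff] at hα
      rw [hprod]
      by_cases hlt : tb.toSyn (pr α) < tb.toSyn (pr β)
      · exact Or.inl hlt
      by_cases hpe : pr α = pr β
      · right
        refine ⟨hpe, ?_⟩
        have hcoef : MvPolynomial.coeff α f = Q.coeff (α 0) := by
          conv_lhs => rw [← cons_pr α, hpe]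
          exact hfprβ (α 0)
        have hle : α 0 ≤ β 0 := by
          by_contra hgt
          exact hα (by rw [hcoef, hQgt _ (by omega)])
        have hne0 : α 0 ≠ β 0 := by
          intro h
          apply hne
          rw [← cons_pr α, ← cons_pr β, hpe, h]
        omega
      · exfalso
        apply hα
        have h := hother (pr α) hpe hlt (α 0)
        rwa [cons_pr] at h
    have hfI : f ∈ MvPolynomial.vanishingIdeal k A := by
      rw [MvPolynomial.mem_vanishingIdeal_iff]
      intro x hx
      have hx0 : x 0 ∈ (fun x : Fin (n + 1) → k => x 0) '' A := ⟨x, hx, rfl⟩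
      have hx0Y : x 0 ∈ Yfin := by rw [hYf, Set.Finite.mem_toFinset]; exact hx0
      have hx' : Fin.tail x ∈ fiberAt A (x 0) := by
        show Fin.cons (x 0) (Fin.tail x) ∈ A
        rw [Fin.cons_self_tail]; exact hx
      have hsec := eval_section F (x 0) (Fin.tail x)
      rw [← hf, Fin.cons_self_tail] at hsec
      rw [MvPolynomial.aeval_eq_eval, hsec]
      have hsum : ∑ lam ∈ Yfin, Polynomial.eval (MvPolynomial.C (x 0))
          (Polynomial.C (MvPolynomial.C (c lam) * (G lam - M))
            * ((Lagrange.basis Yfin id lam).map MvPolynomial.C))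
          = MvPolynomial.C (c (x 0)) * (G (x 0) - M) := by
        rw [Finset.sum_eq_single_of_mem (x 0) hx0Y]
        · rw [Polynomial.eval_mul, Polynomial.eval_C, Polynomial.eval_map,
            Polynomial.eval₂_at_apply,
            show (Lagrange.basis Yfin id (x 0)).eval (x 0) = 1 from
              by simpa using Lagrange.eval_basis_self (Set.injOn_id _) hx0Y]
          rw [map_one, mul_one]
        · intro mu hmu hne
          rw [Polynomial.eval_mul, Polynomial.eval_C, Polynomial.eval_map,
            Polynomial.eval₂_at_apply,
            show (Lagrange.basis Yfin id mu).eval (x 0) = 0 from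
              by simpa using Lagrange.eval_basis_of_ne (v := id) hne hx0Y]
          rw [map_zero, mul_zero]
      have hFeval : F.eval (MvPolynomial.C (x 0)) = MvPolynomial.C (c (x 0)) * G (x 0) := by
        rw [hF, Polynomial.eval_add, Polynomial.eval_mul, Polynomial.eval_C,
          Polynomial.eval_map, Polynomial.eval₂_at_apply, Polynomial.eval_finset_sum, hsum]
        have hQev : Q.eval (x 0) = c (x 0) := by
          rw [hQ, hc]; simp
        rw [hQev]
        ring
      rw [hFeval]
      by_cases hcase : pr β ∈ expC tb (MvPolynomial.vanishingIdeal k (fiberAt A (x 0)))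
      · have hGI : G (x 0) ∈ MvPolynomial.vanishingIdeal k (fiberAt A (x 0)) := by
          rw [hG]; dsimp only; rw [dif_pos hcase]; exact hgI _ hcase
        rw [map_mul, ← MvPolynomial.aeval_eq_eval, MvPolynomial.mem_vanishingIdeal_iff.mp hGI _ hx', mul_zero]
      · have hq0 : q.eval (x 0) = 0 := by
          rw [hq, Polynomial.eval_prod]
          apply Finset.prod_eq_zero (i := x 0)
          · rw [Set.Finite.mem_toFinset]; exact ⟨hx0, hcase⟩
          · simp
        have hc0 : c (x 0) = 0 := by rw [hc]; dsimp only; rw [hq0, mul_zero]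
        rw [hc0, map_zero, zero_mul, map_zero]
    exact ⟨f, hfI, hfβ, hfmax⟩
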